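/- Let A be a topological space and X a Banach space with closed unit ball B₁, and X* its dual with closed unit ball B₁*. Let C : A → X assign to each a a convex cone C(a) ⊆ X and let C°(a) = { y ∈ X* : y(x) ≤ 0 for all x ∈ C(a) }. If a ↦ C(a) ∩ B₁ is lower hemicontinuous with respect to the norm topology on X at a point a, then a ↦ C°(a) ∩ B₁* is upper hemicontinuous at a with respect to the weak-* topology on X*. -/

import Mathlib

open Filter Topology Metric Set

/-- If `a ↦ C(a) ∩ B₁` is norm-topology lower hemicontinuous at `a`, then
`a ↦ C°(a) ∩ B₁*` is weak-* upper hemicontinuous at `a`. -/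
theorem polar_weakstar_uhc_of_lhc
    {A X : Type*} [TopologicalSpace A]
    [NormedAddCommGroup X] [NormedSpace ℝ X] [CompleteSpace X]
    (C : A → Set X)
    (hconv : ∀ a, Convex ℝ (C a))
    (hcone : ∀ a, ∀ x ∈ C a, ∀ r : ℝ, 0 ≤ r → r • x ∈ C a)
    (a : A)
    (hlhc : ∀ V : Set X, IsOpen V → ((C a ∩ Metric.closedBall 0 1) ∩ V).Nonempty →
      ∀ᶠ a' in 𝓝 a, ((C a' ∩ Metric.closedBall 0 1) ∩ V).Nonempty) :
    ∀ U : Set (WeakDual ℝ X), IsOpen U →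
      {y : WeakDual ℝ X | (∀ x ∈ C a, y x ≤ 0) ∧ ‖WeakDual.toStrongDual y‖ ≤ 1} ⊆ U →
        ∀ᶠ a' in 𝓝 a,
          {y : WeakDual ℝ X | (∀ x ∈ C a', y x ≤ 0) ∧ ‖WeakDual.toStrongDual y‖ ≤ 1} ⊆ U := by
  classical
  intro U hU hsub
  by_contra hcon
  rw [Filter.not_eventually] at hcon
  set S : A → Set (WeakDual ℝ X) :=
    fun a' => {y | (∀ x ∈ C a', y x ≤ 0) ∧ ‖WeakDual.toStrongDual y‖ ≤ 1} with hS
  -- choice of bad functionals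
  set g : A → WeakDual ℝ X :=
    fun a' => if h : ∃ y, y ∈ S a' ∧ y ∉ U then h.choose else 0 with hg
  have hgspec : ∀ a', ¬ S a' ⊆ U → g a' ∈ S a' ∧ g a' ∉ U := by
    intro a' h
    have h' : ∃ y, y ∈ S a' ∧ y ∉ U := by
      rw [Set.not_subset] at h
      obtain ⟨y, hy, hy'⟩ := h
      exact ⟨y, hy, hy'⟩
    simp only [hg, dif_pos h']
    exact h'.choose_spec
  set F' : Filter A := 𝓝 a ⊓ 𝓟 {a' | ¬ S a' ⊆ U} with hF'def
  have hF' : F'.NeBot := frequently_iff_neBot.mp hcon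
  have hBad : ∀ᶠ a' in F', ¬ S a' ⊆ U :=
    (inf_le_right : F' ≤ 𝓟 _) (Filter.mem_principal_self _)
  set L : Filter (WeakDual ℝ X) := F'.map g with hLdef
  haveI : L.NeBot := hF'.map g
  set K : Set (WeakDual ℝ X) :=
    (WeakDual.toStrongDual ⁻¹' Metric.closedBall 0 1) ∩ Uᶜ with hKdef
  have hK : IsCompact K :=
    (WeakDual.isCompact_closedBall (𝕜 := ℝ) (E := X) 0 1).inter_right hU.isClosed_compl
  have hLK : L ≤ 𝓟 K := by
    rw [Filter.le_principal_iff, Filter.mem_map]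
    filter_upwards [hBad] with a' h
    obtain ⟨⟨_, hnorm⟩, hnotU⟩ := hgspec a' h
    exact ⟨by simpa [Metric.mem_closedBall, dist_zero_right] using hnorm, hnotU⟩
  obtain ⟨y, hyK, hy⟩ := hK.exists_clusterPt hLK
  -- the cluster point annihilates C a on the unit ball
  have key : ∀ x ∈ C a, ‖x‖ ≤ 1 → y x ≤ 0 := by
    intro x hx hx1
    have hle : ∀ ε : ℝ, 0 < ε → y x ≤ 0 + ε := by
      intro ε hε
      have hne : ((C a ∩ Metric.closedBall 0 1) ∩ Metric.ball x ε).Nonempty :=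
        ⟨x, ⟨hx, by simpa [Metric.mem_closedBall, dist_zero_right] using hx1⟩,
          Metric.mem_ball_self hε⟩
      have hev := hlhc _ Metric.isOpen_ball hne
      have hevF' : ∀ᶠ a' in F', ((C a' ∩ Metric.closedBall 0 1) ∩ Metric.ball x ε).Nonempty :=
        hev.filter_mono inf_le_left
      have hLev : ∀ᶠ z in L, z x ≤ ε := by
        rw [hLdef, Filter.eventually_map]
        filter_upwards [hevF', hBad] with a' hne' hbad'
        obtain ⟨x', ⟨hx'C, _⟩, hx'V⟩ := hne'
        obtain ⟨⟨hgC, hgN⟩, _⟩ := hgspec a' hbad'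
        have h1 : (g a') x' ≤ 0 := hgC x' hx'C
        have h2 : (g a') (x - x') ≤ ε := by
          have hb : (g a') (x - x') ≤ ‖WeakDual.toStrongDual (g a')‖ * ‖x - x'‖ := by
            calc (g a') (x - x') ≤ |(g a') (x - x')| := le_abs_self _
              _ = ‖(WeakDual.toStrongDual (g a')) (x - x')‖ := rfl
              _ ≤ ‖WeakDual.toStrongDual (g a')‖ * ‖x - x'‖ :=
                ContinuousLinearMap.le_opNorm _ _
          have hdist : ‖x - x'‖ ≤ ε := by
            have := Metric.mem_ball.mp hx'V
            rw [dist_comm] at this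
            exact le_of_lt (by simpa [dist_eq_norm] using this)
          calc (g a') (x - x') ≤ ‖WeakDual.toStrongDual (g a')‖ * ‖x - x'‖ := hb
            _ ≤ 1 * ε := mul_le_mul hgN hdist (norm_nonneg _) zero_le_one
            _ = ε := one_mul ε
        have : (g a') x = (g a') x' + (g a') (x - x') := by
          rw [← map_add]
          congr 1
          abel
        rw [this]
        linarith
      have hclosed : IsClosed {z : WeakDual ℝ X | z x ≤ ε} :=
        isClosed_le (WeakDual.eval_continuous x) continuous_const
      have hyc : y ∈ closure {z : WeakDual ℝ X | z x ≤ ε} :=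
        mem_closure_iff_clusterPt.mpr (hy.mono (Filter.le_principal_iff.mpr hLev))
      rw [hclosed.closure_eq] at hyc
      simpa using hyc
    have := le_of_forall_pos_le_add hle
    simpa using this
  have hyS : y ∈ S a := by
    constructor
    · intro x hx
      rcases eq_or_ne x 0 with rfl | hx0
      · simp
      · have hr : (0 : ℝ) < ‖x‖⁻¹ := inv_pos.mpr (norm_pos_iff.mpr hx0)
        have hmem : ‖x‖⁻¹ • x ∈ C a := hcone a x hx _ hr.le
        have hnorm : ‖‖x‖⁻¹ • x‖ ≤ 1 := by
          rw [norm_smul, norm_inv, norm_norm, inv_mul_cancel₀ (norm_ne_zero_iff.mpr hx0)]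
        have := key _ hmem hnorm
        rw [map_smul] at this
        have h' : ‖x‖⁻¹ * y x ≤ 0 := this
        nlinarith [hr]
    · simpa [Metric.mem_closedBall, dist_zero_right] using hyK.1
  exact hyK.2 (hsub hyS)
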